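/- Let M be a nondegenerate R-lattice over the ring of integers R of a local field of characteristic ≠ 2, and let N, N' be R-lattices of the same rank n with Gram matrices G, G' such that all entries of G − G' lie in 4(dM)²𝔭, where dM is the discriminant and 𝔭 the maximal ideal. Then N is primitively represented by M if and only if N' is primitively represented by M. -/

import Mathlib

open Matrix

/-- Primitive representation: `T` with `Tᵀ H T = G` whose image is a direct summand
(equivalently `T` has a left inverse). -/
def PrimRep {R : Type*} [CommRing R] {ι κ : Type*} [Fintype ι] [Fintype κ] [DecidableEq κ]
    (G : Matrix κ κ R) (H : Matrix ι ι R) : Prop :=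
  ∃ T : Matrix ι κ R, Tᵀ * H * T = G ∧ ∃ P : Matrix κ ι R, P * T = 1

namespace PrimRepAux

variable {R : Type*} [CommRing R]

/-- entries of a product, left factor in ideal -/
theorem ent_mul_left {a b c : ℕ} {I : Ideal R} {A : Matrix (Fin a) (Fin b) R}
    (B : Matrix (Fin b) (Fin c) R) (hA : ∀ i j, A i j ∈ I) : ∀ i j, (A * B) i j ∈ I := by
  intro i j
  rw [Matrix.mul_apply]
  exact Ideal.sum_mem _ fun k _ => I.mul_mem_right _ (hA i k)

theorem ent_mul_right {a b c : ℕ} {I : Ideal R} (A : Matrix (Fin a) (Fin b) R)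
    {B : Matrix (Fin b) (Fin c) R} (hB : ∀ i j, B i j ∈ I) : ∀ i j, (A * B) i j ∈ I := by
  intro i j
  rw [Matrix.mul_apply]
  exact Ideal.sum_mem _ fun k _ => I.mul_mem_left _ (hB k j)

theorem ent_mul_mul {a b c : ℕ} {I J : Ideal R} {A : Matrix (Fin a) (Fin b) R}
    {B : Matrix (Fin b) (Fin c) R} (hA : ∀ i j, A i j ∈ I) (hB : ∀ i j, B i j ∈ J) :
    ∀ i j, (A * B) i j ∈ I * J := by
  intro i j
  rw [Matrix.mul_apply]
  exact Ideal.sum_mem _ fun k _ => Ideal.mul_mem_mul (hA i k) (hB k j)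

/-- The Newton iteration: Y_{k+1} = -C - d (Y_k Q Y_k). -/
noncomputable def iter {n : ℕ} (d : R) (Q C : Matrix (Fin n) (Fin n) R) : ℕ → Matrix (Fin n) (Fin n) R
  | 0 => 0
  | (k+1) => -C - d • (iter d Q C k * Q * iter d Q C k)

variable {n : ℕ} {d : R} {Q C : Matrix (Fin n) (Fin n) R} {I : Ideal R}

theorem iter_mem (hC : ∀ i j, C i j ∈ I) : ∀ k i j, iter d Q C k i j ∈ I := by
  intro k
  induction k with
  | zero => intro i j; simpa [iter] using I.zero_mem
  | succ k ih =>
    intro i j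
    simp only [iter, Matrix.sub_apply, Matrix.neg_apply, Matrix.smul_apply, smul_eq_mul]
    exact I.sub_mem (I.neg_mem (hC i j))
      (I.mul_mem_left d (ent_mul_left _ (ent_mul_left Q ih) i j))

theorem iter_symm (hC : C.IsSymm) (hQ : Q.IsSymm) : ∀ k, (iter d Q C k).IsSymm := by
  intro k
  induction k with
  | zero => simp [iter, Matrix.IsSymm]
  | succ k ih =>
    unfold Matrix.IsSymm at *
    simp only [iter, transpose_sub, transpose_neg, transpose_smul, transpose_mul, hC, hQ, ih,
      Matrix.mul_assoc]

theorem iter_succ_sub_mem (hC : ∀ i j, C i j ∈ I) :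
    ∀ k i j, (iter d Q C (k+1) - iter d Q C k) i j ∈ I ^ (k + 1) := by
  intro k
  induction k with
  | zero =>
    intro i j
    simp only [iter, Matrix.mul_zero, Matrix.zero_mul, smul_zero, sub_zero, pow_one,
      Matrix.sub_apply, Matrix.neg_apply]
    simpa using I.neg_mem (hC i j)
  | succ k ih =>
    have hid : iter d Q C (k+2) - iter d Q C (k+1)
        = -(d • (iter d Q C (k+1) * Q * (iter d Q C (k+1) - iter d Q C k)
            + (iter d Q C (k+1) - iter d Q C k) * Q * iter d Q C k)) := by
      show iter d Q C (k+1+1) - iter d Q C (k+1) = _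
      simp only [iter]
      simp only [Matrix.mul_sub, Matrix.sub_mul, smul_sub, smul_add]
      abel
    intro i j
    rw [hid]
    rw [Matrix.neg_apply, Matrix.smul_apply, smul_eq_mul]
    apply neg_mem
    apply Ideal.mul_mem_left
    rw [Matrix.add_apply]
    apply Ideal.add_mem
    · have := ent_mul_mul (J := I ^ (k+1)) (ent_mul_left Q (iter_mem (d:=d) (Q:=Q) hC (k+1))) ih i j
      have hle : I * I ^ (k+1) ≤ I ^ (k+2) := le_of_eq (by rw [pow_succ (n := k+1), mul_comm])
      exact hle this
    · have h1 : ∀ i j, ((iter d Q C (k+1) - iter d Q C k) * Q) i j ∈ I ^ (k+1) :=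
        ent_mul_left Q ih
      have := ent_mul_mul h1 (iter_mem (d:=d) (Q:=Q) hC k) i j
      have hle : I ^ (k+1) * I ≤ I ^ (k+2) := by rw [pow_succ (n := k+1)]
      exact hle this

theorem iter_cauchy (hC : ∀ i j, C i j ∈ I) {a b : ℕ} (hab : a ≤ b) :
    ∀ i j, (iter d Q C b - iter d Q C a) i j ∈ I ^ a := by
  induction b with
  | zero =>
    intro i j
    obtain rfl : a = 0 := Nat.le_zero.mp hab
    simp
  | succ b ih =>
    rcases Nat.lt_or_ge a (b+1) with h | h
    · have hab' : a ≤ b := Nat.lt_succ_iff.mp h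
      intro i j
      have : (iter d Q C (b+1) - iter d Q C a) i j
          = (iter d Q C (b+1) - iter d Q C b) i j + (iter d Q C b - iter d Q C a) i j := by
        simp [Matrix.sub_apply]
      rw [this]
      refine Ideal.add_mem _ ?_ (ih hab' i j)
      exact Ideal.pow_le_pow_right hab (iter_succ_sub_mem hC b i j)
    · obtain rfl : a = b + 1 := le_antisymm hab h
      intro i j; simp

end PrimRepAux

open IsLocalRing in
theorem key {R : Type*} [CommRing R] [IsLocalRing R]
    [IsAdicComplete (IsLocalRing.maximalIdeal R) R]
    {m n : ℕ} (M : Matrix (Fin m) (Fin m) R) (hM : M.IsSymm)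
    (G C : Matrix (Fin n) (Fin n) R)
    (hC : ∀ i j, C i j ∈ maximalIdeal R) (hCs : C.IsSymm)
    (h : PrimRep G M) : PrimRep (G - (4 * M.det ^ 2) • C) M := by
  classical
  obtain ⟨T, hT, P, hPT⟩ := h
  set I := maximalIdeal R with hI
  set d := M.det with hd
  set A := M.adjugate with hA
  set Q : Matrix (Fin n) (Fin n) R := P * A * Pᵀ with hQ
  have hAs : Aᵀ = A := by rw [hA, Matrix.adjugate_transpose, hM]
  have hQs : Q.IsSymm := by
    show Qᵀ = Q
    rw [hQ, Matrix.transpose_mul, Matrix.transpose_mul, Matrix.transpose_transpose, hAs,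
      Matrix.mul_assoc]
  have hTP : Tᵀ * Pᵀ = 1 := by rw [← Matrix.transpose_mul, hPT, Matrix.transpose_one]
  have hMA : M * A = d • (1 : Matrix (Fin m) (Fin m) R) := Matrix.mul_adjugate M
  have hAM : A * M = d • (1 : Matrix (Fin m) (Fin m) R) := Matrix.adjugate_mul M
  -- membership in smul-top submodules
  have hsm : ∀ (k : ℕ) (x : R), x ∈ ((I ^ k • ⊤ : Submodule R R)) ↔ x ∈ I ^ k := by
    intro k x; rw [smul_eq_mul, Ideal.mul_top]
  -- construct the limit Y of the Newton iteration
  have hex : ∀ i j, ∃ L : R, ∀ k, PrimRepAux.iter d Q C k i j ≡ L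
      [SMOD ((I ^ k • ⊤ : Submodule R R))] := by
    intro i j
    apply IsPrecomplete.prec (IsAdicComplete.toIsPrecomplete)
    intro a b hab
    rw [SModEq.sub_mem, hsm]
    have := PrimRepAux.iter_cauchy (d := d) (Q := Q) hC hab i j
    rw [Matrix.sub_apply] at this
    have := (I ^ a).neg_mem this
    simpa using this
  choose Lf hLf using hex
  set Y : Matrix (Fin n) (Fin n) R := Matrix.of Lf with hY
  have hYk : ∀ k i j, PrimRepAux.iter d Q C k i j - Y i j ∈ I ^ k := by
    intro k i j
    have := hLf i j k
    rw [SModEq.sub_mem, hsm] at this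
    exact this
  have hzero : ∀ x : R, (∀ k : ℕ, x ∈ I ^ k) → x = 0 := by
    intro x hx
    apply (IsAdicComplete.toIsHausdorff (I := I) (M := R)).haus
    intro k
    rw [SModEq.zero, hsm]
    exact hx k
  have hYmem : ∀ i j, Y i j ∈ I := by
    intro i j
    have h1 := hYk 1 i j
    rw [pow_one] at h1
    have h2 := PrimRepAux.iter_mem (d := d) (Q := Q) hC 1 i j
    have h3 : Y i j = PrimRepAux.iter d Q C 1 i j - (PrimRepAux.iter d Q C 1 i j - Y i j) := by
      ring
    rw [h3]; exact I.sub_mem h2 h1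
  have hYs : Y.IsSymm := by
    show Yᵀ = Y
    ext i j
    rw [Matrix.transpose_apply]
    have hmem : ∀ k : ℕ, Y j i - Y i j ∈ I ^ k := by
      intro k
      have e1 := hYk k j i
      have e2 := hYk k i j
      have es : PrimRepAux.iter d Q C k j i = PrimRepAux.iter d Q C k i j :=
        (PrimRepAux.iter_symm hCs hQs k).apply i j
      have h3 : Y j i - Y i j = (PrimRepAux.iter d Q C k i j - Y i j)
          - (PrimRepAux.iter d Q C k j i - Y j i) := by
        rw [es]; ring
      rw [h3]; exact (I ^ k).sub_mem e2 e1
    exact sub_eq_zero.mp (hzero _ hmem)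
  -- Y solves the quadratic equation
  have hEq : Y + d • (Y * Q * Y) + C = 0 := by
    ext i j
    rw [Matrix.zero_apply]
    apply hzero
    intro k
    set Yk := PrimRepAux.iter d Q C k with hYkdef
    have hit : PrimRepAux.iter d Q C (k + 1) = -C - d • (Yk * Q * Yk) := rfl
    have hdiff : ∀ i j, (Y - Yk) i j ∈ I ^ k := by
      intro i j
      rw [Matrix.sub_apply]
      have := (I ^ k).neg_mem (hYk k i j)
      simpa [neg_sub] using this
    have hid : Y + d • (Y * Q * Y) + C
        = (Yk - PrimRepAux.iter d Q C (k + 1)) + ((Y - Yk)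
          + d • (Y * Q * (Y - Yk) + (Y - Yk) * Q * Yk)) := by
      rw [hit]
      simp only [Matrix.mul_sub, Matrix.sub_mul, smul_sub, smul_add]
      module
    rw [hid, Matrix.add_apply]
    refine Ideal.add_mem _ ?_ ?_
    · have := (I ^ (k + 1)).neg_mem (PrimRepAux.iter_succ_sub_mem (d := d) (Q := Q) hC k i j)
      rw [← Matrix.neg_apply, neg_sub] at this
      exact Ideal.pow_le_pow_right (Nat.le_succ k) this
    · rw [Matrix.add_apply, Matrix.smul_apply, Matrix.add_apply, smul_eq_mul]
      refine Ideal.add_mem _ (hdiff i j) (Ideal.mul_mem_left _ _ (Ideal.add_mem _ ?_ ?_))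
      · exact PrimRepAux.ent_mul_right (Y * Q) hdiff i j
      · exact PrimRepAux.ent_mul_left Yk (PrimRepAux.ent_mul_left Q hdiff) i j
  -- assemble the new representation
  have hYC : Y + d • (Y * Q * Y) = -C := eq_neg_of_add_eq_zero_left hEq
  have hYst : Yᵀ = Y := hYs
  set E : Matrix (Fin m) (Fin n) R := (2 * d) • (A * (Pᵀ * Y)) with hE
  have hEt : Eᵀ = (2 * d) • (Yᵀ * P * A) := by
    rw [hE, Matrix.transpose_smul, Matrix.transpose_mul, Matrix.transpose_mul,
      Matrix.transpose_transpose, hAs, Matrix.mul_assoc]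
  have haux1 : ∀ X : Matrix (Fin m) (Fin n) R, M * (A * X) = d • X := fun X => by
    rw [← Matrix.mul_assoc, hMA, Matrix.smul_mul, Matrix.one_mul]
  have haux2 : ∀ X : Matrix (Fin m) (Fin n) R, A * (M * X) = d • X := fun X => by
    rw [← Matrix.mul_assoc, hAM, Matrix.smul_mul, Matrix.one_mul]
  have haux3 : ∀ X : Matrix (Fin n) (Fin n) R, Tᵀ * (Pᵀ * X) = X := fun X => by
    rw [← Matrix.mul_assoc, hTP, Matrix.one_mul]
  have hS2 : Tᵀ * M * E = (2 * (d * d)) • Y := by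
    simp only [hE, Matrix.smul_mul, Matrix.mul_smul, Matrix.mul_assoc, smul_smul]
    rw [haux1, Matrix.mul_smul, haux3, smul_smul]
    congr 1
    ring
  have hS3 : Eᵀ * M * T = (2 * (d * d)) • Y := by
    simp only [hEt, Matrix.smul_mul, Matrix.mul_smul, Matrix.mul_assoc, smul_smul]
    rw [haux2, Matrix.mul_smul, Matrix.mul_smul, hPT, Matrix.mul_one, hYst, smul_smul]
    congr 1
    ring
  have hS4 : Eᵀ * M * E = (2 * (d * d)) • ((2 * d) • (Y * Q * Y)) := by
    rw [hEt]
    simp only [hEt, hE, Matrix.smul_mul, Matrix.mul_smul, Matrix.mul_assoc, smul_smul]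
    rw [haux2, Matrix.mul_smul, Matrix.mul_smul, hYst, smul_smul, hQ]
    simp only [Matrix.mul_assoc]
    congr 1
    ring
  refine ⟨T + E, ?_, ?_⟩
  · have expand : (T + E)ᵀ * M * (T + E)
        = Tᵀ * M * T + Tᵀ * M * E + Eᵀ * M * T + Eᵀ * M * E := by
      rw [Matrix.transpose_add, Matrix.add_mul, Matrix.add_mul, Matrix.mul_add, Matrix.mul_add]
      abel
    rw [expand, hT, hS2, hS3, hS4]
    have hsum : G + (2 * (d * d)) • Y + (2 * (d * d)) • Y
          + (2 * (d * d)) • ((2 * d) • (Y * Q * Y))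
        = G + (4 * d ^ 2) • (Y + d • (Y * Q * Y)) := by
      simp only [smul_smul, smul_add]
      module
    rw [hsum, hYC, smul_neg, ← sub_eq_add_neg]
  · have hP' : P * (T + E) = 1 + (2 * d) • (Q * Y) := by
      rw [Matrix.mul_add, hPT, hE, Matrix.mul_smul,
        show P * (A * (Pᵀ * Y)) = P * A * Pᵀ * Y from by simp only [Matrix.mul_assoc],
        ← hQ]
    have hNmem : ∀ i j, ((2 * d) • (Q * Y)) i j ∈ I := by
      intro i j
      rw [Matrix.smul_apply, smul_eq_mul]
      exact I.mul_mem_left _ (PrimRepAux.ent_mul_right Q hYmem i j)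
    have hdet : (P * (T + E)).det - 1 ∈ I := by
      have hmap : (P * (T + E)).map (Ideal.Quotient.mk I) = 1 := by
        ext i j
        rw [Matrix.map_apply, hP', Matrix.add_apply, map_add,
          Ideal.Quotient.eq_zero_iff_mem.mpr (hNmem i j), add_zero]
        by_cases hij : i = j <;> simp [Matrix.one_apply, hij]
      have h5 := RingHom.map_det (Ideal.Quotient.mk I) (P * (T + E))
      rw [RingHom.mapMatrix_apply, hmap, Matrix.det_one] at h5
      rw [← Ideal.Quotient.eq_zero_iff_mem, _root_.map_sub, _root_.map_one, h5, sub_self]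
    have hunit : IsUnit (P * (T + E)).det := by
      have h6 : 1 - (P * (T + E)).det ∈ nonunits R := by
        rw [← IsLocalRing.mem_maximalIdeal]
        have h7 := I.neg_mem hdet
        rw [neg_sub] at h7
        exact h7
      have h8 := IsLocalRing.isUnit_one_sub_self_of_mem_nonunits _ h6
      simpa using h8
    refine ⟨(P * (T + E))⁻¹ * P, ?_⟩
    rw [Matrix.mul_assoc]
    exact Matrix.nonsing_inv_mul _ hunit

/-- Hensel-type rigidity: if the Gram matrices of `N` and `N'` are congruent modulo
`4 (dM)² 𝔭`, then `N` is primitively represented by `M` iff `N'` is. -/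
theorem primRep_congruent_iff
    (R : Type*) [CommRing R] [IsDomain R] [IsDiscreteValuationRing R]
    [IsAdicComplete (IsLocalRing.maximalIdeal R) R]
    [Finite (IsLocalRing.ResidueField R)]
    (h2 : (2 : R) ≠ 0)
    {m n : ℕ} (M : Matrix (Fin m) (Fin m) R) (hM : M.IsSymm) (hMd : M.det ≠ 0)
    (G G' : Matrix (Fin n) (Fin n) R) (hG : G.IsSymm) (hG' : G'.IsSymm)
    (hclose : ∀ i j, ∃ c ∈ IsLocalRing.maximalIdeal R,
      G i j - G' i j = 4 * M.det ^ 2 * c) :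
    PrimRep G M ↔ PrimRep G' M := by

  classical
  have h4 : (4 : R) * M.det ^ 2 ≠ 0 := by
    have h22 : (4 : R) = 2 * 2 := by norm_num
    exact mul_ne_zero (h22 ▸ mul_ne_zero h2 h2) (pow_ne_zero _ hMd)
  choose c hc1 hc2 using hclose
  set C : Matrix (Fin n) (Fin n) R := Matrix.of c with hCdef
  have hCmem : ∀ i j, C i j ∈ IsLocalRing.maximalIdeal R := hc1
  have hCs : C.IsSymm := by
    show Cᵀ = C
    ext i j
    rw [Matrix.transpose_apply]
    apply mul_left_cancel₀ h4
    have e1 : (4 : R) * M.det ^ 2 * C i j = G i j - G' i j := (hc2 i j).symm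
    have e2 : (4 : R) * M.det ^ 2 * C j i = G j i - G' j i := (hc2 j i).symm
    rw [e1, e2, hG.apply i j, hG'.apply i j]
  have hGG' : G' = G - (4 * M.det ^ 2) • C := by
    ext i j
    rw [Matrix.sub_apply, Matrix.smul_apply, smul_eq_mul]
    have hCc : C i j = c i j := rfl
    rw [hCc]
    linear_combination -(hc2 i j)
  constructor
  · intro h
    rw [hGG']
    exact key M hM G C hCmem hCs h
  · intro h
    have hmem' : ∀ i j, (-C) i j ∈ IsLocalRing.maximalIdeal R := fun i j => by
      rw [Matrix.neg_apply]; exact neg_mem (hCmem i j)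
    have hCs' : (-C).IsSymm := by
      show (-C)ᵀ = -C
      rw [Matrix.transpose_neg, hCs]
    have h9 := key M hM G' (-C) hmem' hCs' h
    rw [hGG', smul_neg, sub_neg_eq_add, sub_add_cancel] at h9
    exact h9
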